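/- arXiv:1810.03311 — 5 statements merged into one kernel-verified Lean document; each statement's English description precedes it below -/
import Mathlib

section
/- (Main stability theorem, product form.) Let E be an edge relation on {1,…,k}, let P₁,…,P_k be invertible n×n real matrices, let J₁,…,J_k be n×n real matrices, and set A_i = P_i J_i P_i⁻¹. Suppose there is a constant K with 0 ≤ K < 1 and, for each edge (r,s) ∈ E, a nonempty set I_{(r,s)} ⊆ (0,∞) such that ‖P_s⁻¹ P_r · exp(η J_r)‖ ≤ K for every η ∈ I_{(r,s)}. Let C = (max_{1≤i≤k} ‖P_i‖)·(max_{1≤i≤k} ‖P_i⁻¹‖). Then for every n ≥ 1, every sequence σ₀, σ₁, …, σ_n in {1,…,k} with (σ_j, σ_{j+1}) ∈ E for all 0 ≤ j ≤ n−1, and every choice of durations τ_j ∈ I_{(σ_j, σ_{j+1})} for 0 ≤ j ≤ n−1, the ordered product satisfies ‖exp(τ_{n−1} A_{σ_{n−1}}) ⋯ exp(τ₁ A_{σ₁}) · exp(τ₀ A_{σ₀})‖ ≤ C · K^n. -/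
open scoped Matrix.Norms.L2Operator
open NormedSpace

/-- Main stability theorem, product form.  Let `E` be an edge relation on `{1,…,k}`,
`P₁,…,P_k` invertible `n × n` real matrices, `J₁,…,J_k` real matrices,
`A_i = P_i J_i P_i⁻¹`.  Suppose `0 ≤ K < 1` and for each edge `(r,s) ∈ E` there is a
nonempty set `I_{(r,s)} ⊆ (0,∞)` with `‖P_s⁻¹ P_r · exp(η J_r)‖ ≤ K` for all
`η ∈ I_{(r,s)}`.  With `C = (max_i ‖P_i‖)·(max_i ‖P_i⁻¹‖)`, every admissible switching
path of length `n ≥ 1` with admissible durations yields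
`‖exp(τ_{n−1} A_{σ_{n−1}}) ⋯ exp(τ₀ A_{σ₀})‖ ≤ C · Kⁿ`. -/
theorem switched_system_product_norm_le {n k : ℕ} (hk : 0 < k)
    (E : Fin k → Fin k → Prop)
    (P J A : Fin k → Matrix (Fin n) (Fin n) ℝ)
    (hP : ∀ i, IsUnit (P i))
    (hA : ∀ i, A i = P i * J i * (P i)⁻¹)
    (K : ℝ) (hK0 : 0 ≤ K) (hK1 : K < 1)
    (I : Fin k → Fin k → Set ℝ)
    (hImem : ∀ r s, E r s → (I r s).Nonempty)
    (hIsub : ∀ r s, E r s → I r s ⊆ Set.Ioi (0 : ℝ))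
    (hKbound : ∀ r s, E r s → ∀ η ∈ I r s, ‖(P s)⁻¹ * P r * exp (η • J r)‖ ≤ K)
    (C : ℝ) (hC : C = (⨆ i, ‖P i‖) * ⨆ i, ‖(P i)⁻¹‖) :
    ∀ N : ℕ, 1 ≤ N → ∀ σ : ℕ → Fin k, (∀ j < N, E (σ j) (σ (j + 1))) →
      ∀ τ : ℕ → ℝ, (∀ j < N, τ j ∈ I (σ j) (σ (j + 1))) →
        ‖((List.range N).reverse.map (fun j => exp (τ j • A (σ j)))).prod‖ ≤ C * K ^ N := by
  intro N hN σ hσ τ hτ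
  have hexp : ∀ j, exp (τ j • A (σ j)) =
      P (σ j) * exp (τ j • J (σ j)) * (P (σ j))⁻¹ := by
    intro j
    rw [hA, ← smul_mul_assoc, ← mul_smul_comm, Matrix.exp_conj _ _ (hP (σ j))]
  have hPP : ∀ i : Fin k, P i * (P i)⁻¹ = 1 := fun i =>
    Matrix.mul_nonsing_inv _ ((Matrix.isUnit_iff_isUnit_det _).mp (hP i))
  have key : ∀ M, 1 ≤ M → (∀ j < M, E (σ j) (σ (j + 1))) →
      (∀ j < M, τ j ∈ I (σ j) (σ (j + 1))) →
      ∃ Q : Matrix (Fin n) (Fin n) ℝ,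
        ((List.range M).reverse.map (fun j => exp (τ j • A (σ j)))).prod
          = P (σ M) * Q * (P (σ 0))⁻¹ ∧ ‖Q‖ ≤ K ^ M := by
    intro M hM
    induction M, hM using Nat.le_induction with
    | base =>
      intro hσ' hτ'
      refine ⟨(P (σ 1))⁻¹ * P (σ 0) * exp (τ 0 • J (σ 0)), ?_, ?_⟩
      · have h1 : ((List.range 1).reverse.map (fun j => exp (τ j • A (σ j)))).prod
            = exp (τ 0 • A (σ 0)) := by simp [List.range_succ]
        rw [h1, hexp, show P (σ 1) * ((P (σ 1))⁻¹ * P (σ 0) * exp (τ 0 • J (σ 0)))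
            = P (σ 1) * (P (σ 1))⁻¹ * (P (σ 0) * exp (τ 0 • J (σ 0))) by simp [mul_assoc],
          hPP, one_mul, mul_assoc]
      · simpa using hKbound _ _ (hσ' 0 one_pos) _ (hτ' 0 one_pos)
    | succ M hM ih =>
      intro hσ' hτ'
      obtain ⟨Q, hQeq, hQle⟩ := ih (fun j hj => hσ' j (hj.trans (Nat.lt_succ_self M)))
        (fun j hj => hτ' j (hj.trans (Nat.lt_succ_self M)))
      refine ⟨(P (σ (M + 1)))⁻¹ * P (σ M) * exp (τ M • J (σ M)) * Q, ?_, ?_⟩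
      · rw [List.range_succ, List.reverse_append, List.map_append, List.prod_append]
        simp only [List.reverse_singleton, List.map_cons, List.map_nil, List.prod_cons,
          List.prod_nil, mul_one, List.reverse_nil, List.nil_append]
        rw [hQeq, hexp M]
        have : P (σ M) * exp (τ M • J (σ M)) * (P (σ M))⁻¹ * (P (σ M) * Q * (P (σ 0))⁻¹)
            = P (σ (M + 1)) * ((P (σ (M + 1)))⁻¹ * P (σ M) * exp (τ M • J (σ M)) * Q)
              * (P (σ 0))⁻¹ := by
          rw [show P (σ (M + 1)) * ((P (σ (M + 1)))⁻¹ * P (σ M) * exp (τ M • J (σ M)) * Q)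
              = P (σ (M + 1)) * (P (σ (M + 1)))⁻¹ * P (σ M) * exp (τ M • J (σ M)) * Q by
                simp [mul_assoc]]
          rw [hPP, one_mul]
          calc P (σ M) * exp (τ M • J (σ M)) * (P (σ M))⁻¹ * (P (σ M) * Q * (P (σ 0))⁻¹)
              = P (σ M) * exp (τ M • J (σ M)) * ((P (σ M))⁻¹ * P (σ M)) * Q * (P (σ 0))⁻¹ := by
                simp [mul_assoc]
            _ = P (σ M) * exp (τ M • J (σ M)) * Q * (P (σ 0))⁻¹ := by
                rw [Matrix.nonsing_inv_mul _ ((Matrix.isUnit_iff_isUnit_det _).mp (hP (σ M))),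
                  mul_one]
        rw [this]
      · calc ‖(P (σ (M + 1)))⁻¹ * P (σ M) * exp (τ M • J (σ M)) * Q‖
            ≤ ‖(P (σ (M + 1)))⁻¹ * P (σ M) * exp (τ M • J (σ M))‖ * ‖Q‖ := norm_mul_le _ _
          _ ≤ K * K ^ M := by
              apply mul_le_mul (hKbound _ _ (hσ' M (Nat.lt_succ_self M)) _
                (hτ' M (Nat.lt_succ_self M))) hQle (norm_nonneg _)  hK0
          _ = K ^ (M + 1) := (pow_succ' K M).symm
  obtain ⟨Q, hQeq, hQle⟩ := key N hN hσ hτ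
  rw [hQeq, hC]
  have h1 : ‖P (σ N)‖ ≤ ⨆ i, ‖P i‖ := le_ciSup (f := fun i => ‖P i‖) (Set.Finite.bddAbove (Set.finite_range _)) _
  have h2 : ‖(P (σ 0))⁻¹‖ ≤ ⨆ i, ‖(P i)⁻¹‖ :=
    le_ciSup (f := fun i => ‖(P i)⁻¹‖) (Set.Finite.bddAbove (Set.finite_range _)) _
  calc ‖P (σ N) * Q * (P (σ 0))⁻¹‖ ≤ ‖P (σ N) * Q‖ * ‖(P (σ 0))⁻¹‖ := norm_mul_le _ _
    _ ≤ ‖P (σ N)‖ * ‖Q‖ * ‖(P (σ 0))⁻¹‖ :=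
        mul_le_mul_of_nonneg_right (norm_mul_le _ _) (norm_nonneg _)
    _ ≤ (⨆ i, ‖P i‖) * K ^ N * (⨆ i, ‖(P i)⁻¹‖) := by
        apply mul_le_mul _ h2 (norm_nonneg _) (mul_nonneg ((norm_nonneg _).trans h1)
          (pow_nonneg hK0 N))
        exact mul_le_mul h1 hQle (norm_nonneg _) ((norm_nonneg _).trans h1)
    _ = (⨆ i, ‖P i‖) * (⨆ i, ‖(P i)⁻¹‖) * K ^ N := by ring
end

section
/- (Main stability theorem, exponential-in-time form.) Let E be an edge relation on {1,…,k}, let P₁,…,P_k be invertible n×n real matrices, let J₁,…,J_k be n×n real matrices, and set A_i = P_i J_i P_i⁻¹. Suppose there are constants K with 0 < K < 1 and T > 0 and, for each edge (r,s) ∈ E, a nonempty set I_{(r,s)} ⊆ (0, T] such that ‖P_s⁻¹ P_r · exp(η J_r)‖ ≤ K for every η ∈ I_{(r,s)}. Then there exist constants C > 0 and β > 0 such that for every n ≥ 1, every sequence σ₀, …, σ_n in {1,…,k} with (σ_j, σ_{j+1}) ∈ E for all 0 ≤ j ≤ n−1, and every choice of durations τ_j ∈ I_{(σ_j, σ_{j+1})},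 the ordered product satisfies ‖exp(τ_{n−1} A_{σ_{n−1}}) ⋯ exp(τ₀ A_{σ₀})‖ ≤ C · e^{−β (τ₀ + τ₁ + ⋯ + τ_{n−1})}. (One may take β = −ln(K)/T.) -/
open scoped Matrix.Norms.L2Operator
open NormedSpace

/-- Main stability theorem, exponential-in-time form.  Let `E` be an edge relation on
`{1,…,k}`, `P₁,…,P_k` invertible `n × n` real matrices, `J₁,…,J_k` real matrices,
`A_i = P_i J_i P_i⁻¹`.  Suppose `0 < K < 1`, `T > 0`, and for each edge `(r,s) ∈ E` there
is a nonempty set `I_{(r,s)} ⊆ (0, T]` with `‖P_s⁻¹ P_r · exp(η J_r)‖ ≤ K` for all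
`η ∈ I_{(r,s)}`.  Then there are `C > 0` and `β > 0` such that every admissible switching
path of length `n ≥ 1` with admissible durations satisfies
`‖exp(τ_{n−1} A_{σ_{n−1}}) ⋯ exp(τ₀ A_{σ₀})‖ ≤ C · e^{−β(τ₀+⋯+τ_{n−1})}`. -/
theorem switched_system_exponential_stability {n k : ℕ} (hk : 0 < k)
    (E : Fin k → Fin k → Prop)
    (P J A : Fin k → Matrix (Fin n) (Fin n) ℝ)
    (hP : ∀ i, IsUnit (P i))
    (hA : ∀ i, A i = P i * J i * (P i)⁻¹)
    (K : ℝ) (hK0 : 0 < K) (hK1 : K < 1) (T : ℝ) (hT : 0 < T)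
    (I : Fin k → Fin k → Set ℝ)
    (hImem : ∀ r s, E r s → (I r s).Nonempty)
    (hIsub : ∀ r s, E r s → I r s ⊆ Set.Ioc (0 : ℝ) T)
    (hKbound : ∀ r s, E r s → ∀ η ∈ I r s, ‖(P s)⁻¹ * P r * exp (η • J r)‖ ≤ K) :
    ∃ C > (0 : ℝ), ∃ β > (0 : ℝ),
      ∀ N : ℕ, 1 ≤ N → ∀ σ : ℕ → Fin k, (∀ j < N, E (σ j) (σ (j + 1))) →
        ∀ τ : ℕ → ℝ, (∀ j < N, τ j ∈ I (σ j) (σ (j + 1))) →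
          ‖((List.range N).reverse.map (fun j => exp (τ j • A (σ j)))).prod‖ ≤
            C * Real.exp (-β * ∑ j ∈ Finset.range N, τ j) := by
  set S₁ : ℝ := 1 + ∑ i : Fin k, ‖P i‖ with hS₁
  set S₂ : ℝ := 1 + ∑ i : Fin k, ‖(P i)⁻¹‖ with hS₂
  have hS₁pos : 0 < S₁ := by
    have : (0:ℝ) ≤ ∑ i : Fin k, ‖P i‖ := Finset.sum_nonneg fun i _ => norm_nonneg _
    linarith
  have hS₂pos : 0 < S₂ := by
    have : (0:ℝ) ≤ ∑ i : Fin k, ‖(P i)⁻¹‖ := Finset.sum_nonneg fun i _ => norm_nonneg _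
    rw [hS₂]; linarith
  have hPle : ∀ i : Fin k, ‖P i‖ ≤ S₁ := by
    intro i
    have := Finset.single_le_sum (f := fun i : Fin k => ‖P i‖)
      (fun i _ => norm_nonneg _) (Finset.mem_univ i)
    linarith
  have hPinvle : ∀ i : Fin k, ‖(P i)⁻¹‖ ≤ S₂ := by
    intro i
    have := Finset.single_le_sum (f := fun i : Fin k => ‖(P i)⁻¹‖)
      (fun i _ => norm_nonneg _) (Finset.mem_univ i)
    linarith
  refine ⟨S₁ * S₂, mul_pos hS₁pos hS₂pos, -Real.log K / T,
    div_pos (by simpa using Real.log_neg hK0 hK1) hT, ?_⟩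
  intro N hN σ hσ τ hτ
  set β : ℝ := -Real.log K / T with hβ
  set G : ℕ → Matrix (Fin n) (Fin n) ℝ :=
    fun j => (P (σ (j+1)))⁻¹ * P (σ j) * exp (τ j • J (σ j)) with hG
  -- telescoping identity
  have key : ∀ M : ℕ,
      ((List.range M).reverse.map (fun j => exp (τ j • A (σ j)))).prod
        = P (σ M) * ((List.range M).reverse.map G).prod * (P (σ 0))⁻¹ := by
    intro M
    induction M with
    | zero =>
        simp [Matrix.mul_nonsing_inv _ ((Matrix.isUnit_iff_isUnit_det _).mp (hP (σ 0)))]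
    | succ M ih =>
        rw [List.range_succ]
        simp only [List.reverse_append, List.reverse_cons, List.reverse_nil, List.nil_append,
          List.cons_append, List.map_cons, List.prod_cons, ih]
        have hexp : exp (τ M • A (σ M))
            = P (σ M) * (exp (τ M • J (σ M)) * (P (σ M))⁻¹) := by
          rw [hA, ← Matrix.smul_mul, ← Matrix.mul_smul, Matrix.exp_conj _ _ (hP (σ M)),
            Matrix.mul_assoc]
        have hd1 : IsUnit (P (σ M)).det := (Matrix.isUnit_iff_isUnit_det _).mp (hP (σ M))
        have hd2 : IsUnit (P (σ (M+1))).det := (Matrix.isUnit_iff_isUnit_det _).mp (hP (σ (M+1)))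
        rw [hexp]
        simp only [List.reverse_append, List.reverse_cons, List.reverse_nil, List.nil_append,
          List.cons_append, List.map_cons, List.prod_cons, hG, Matrix.mul_assoc,
          Matrix.nonsing_inv_mul_cancel_left _ _ hd1,
          Matrix.mul_nonsing_inv_cancel_left _ _ hd2]
  -- norm bound on the G-product
  have Gbound : ∀ j, j < N → ‖G j‖ ≤ K := fun j hj => hKbound _ _ (hσ j hj) _ (hτ j hj)
  have prodbound : ∀ M ≤ N, ‖((List.range M).reverse.map G).prod‖ ≤ K ^ M := by
    intro M
    induction M with
    | zero =>
        intro _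
        simp only [List.range_zero, List.reverse_nil, List.map_nil, List.prod_nil, pow_zero]
        have h1 : (Matrix.toEuclideanCLM (𝕜 := ℝ) (n := Fin n)) 1 = 1 := map_one _
        rw [show ‖(1 : Matrix (Fin n) (Fin n) ℝ)‖
            = ‖(Matrix.toEuclideanCLM (𝕜 := ℝ) (n := Fin n)) 1‖ from rfl, h1]
        exact ContinuousLinearMap.norm_id_le
    | succ M ih =>
        intro hMN
        rw [List.range_succ]
        simp only [List.reverse_append, List.reverse_cons, List.reverse_nil, List.nil_append,
          List.cons_append, List.map_cons, List.prod_cons]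
        calc ‖G M * ((List.range M).reverse.map G).prod‖
            ≤ ‖G M‖ * ‖((List.range M).reverse.map G).prod‖ := norm_mul_le _ _
          _ ≤ K * K ^ M := by
              apply mul_le_mul (Gbound M (lt_of_lt_of_le (Nat.lt_succ_self M) hMN))
                (ih (le_trans (Nat.le_succ M) hMN)) (norm_nonneg _) (le_of_lt hK0)
          _ = K ^ (M+1) := (pow_succ' K M).symm
  -- time bound
  have hsum : ∑ j ∈ Finset.range N, τ j ≤ N * T := by
    calc ∑ j ∈ Finset.range N, τ j ≤ ∑ j ∈ Finset.range N, T := by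
          apply Finset.sum_le_sum
          intro j hj
          exact ((hIsub _ _ (hσ j (Finset.mem_range.mp hj))) (hτ j (Finset.mem_range.mp hj))).2
      _ = N * T := by simp [mul_comm]
  have hKN : K ^ N ≤ Real.exp (-β * ∑ j ∈ Finset.range N, τ j) := by
    have hβ0 : 0 < β := div_pos (by simpa using Real.log_neg hK0 hK1) hT
    have h1 : -β * ∑ j ∈ Finset.range N, τ j ≥ -β * (N * T) := by
      apply mul_le_mul_of_nonpos_left hsum (by linarith)
    have h2 : -β * (N * T) = N * Real.log K := by
      field_simp [hβ]
      rw [hβ, div_mul_cancel₀ _ hT.ne']; ring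
    rw [← Real.exp_log (pow_pos hK0 N), Real.log_pow]
    exact Real.exp_le_exp.mpr (by rw [← h2] at *; push_cast; linarith)
  -- finish
  rw [key N]
  calc ‖P (σ N) * ((List.range N).reverse.map G).prod * (P (σ 0))⁻¹‖
      ≤ ‖P (σ N)‖ * ‖((List.range N).reverse.map G).prod‖ * ‖(P (σ 0))⁻¹‖ :=
        le_trans (norm_mul_le _ _) (by
          gcongr
          exact norm_mul_le _ _)
    _ ≤ S₁ * K ^ N * S₂ := by
        apply mul_le_mul _ (hPinvle _) (norm_nonneg _)
          (mul_nonneg (le_of_lt hS₁pos) (pow_nonneg (le_of_lt hK0) N))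
        exact mul_le_mul (hPle _) (prodbound N le_rfl) (norm_nonneg _) (le_of_lt hS₁pos)
    _ ≤ S₁ * S₂ * Real.exp (-β * ∑ j ∈ Finset.range N, τ j) := by
        rw [mul_right_comm]
        gcongr
end

section
/- (Trace obstruction for planar systems.) Let p ≥ 1 and, for each j ∈ {0,…,p−1}, let A_j, J_j be 2×2 real matrices and P_j an invertible 2×2 real matrix with A_j = P_j J_j P_j⁻¹. Suppose there exist η_j > 0 such that ‖P_{j+1 mod p}⁻¹ P_j · exp(η_j J_j)‖ < 1 for every j ∈ {0,…,p−1}. Then there exists j with trace(A_j) < 0; i.e., the traces of A₀,…,A_{p−1} cannot all be nonnegative. -/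
open scoped Matrix.Norms.L2Operator
open NormedSpace Matrix

/-- For a `2 × 2` real matrix, `|det M| ≤ ‖M‖²` (L2 operator norm). -/
lemma abs_det_le_sq_l2_opNorm (M : Matrix (Fin 2) (Fin 2) ℝ) : |M.det| ≤ ‖M‖ ^ 2 := by
  have hcol : ∀ j : Fin 2, (M 0 j) ^ 2 + (M 1 j) ^ 2 ≤ ‖M‖ ^ 2 := by
    intro j
    have hxn : ‖(EuclideanSpace.equiv (Fin 2) ℝ).symm (Pi.single j (1:ℝ))‖ = 1 := by
      rw [EuclideanSpace.norm_eq]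
      fin_cases j <;>
        simp [Fin.sum_univ_two, Pi.single_apply]
    have h1 := M.l2_opNorm_mulVec ((EuclideanSpace.equiv (Fin 2) ℝ).symm (Pi.single j (1:ℝ)))
    rw [hxn, mul_one] at h1
    have hmv : M *ᵥ ((EuclideanSpace.equiv (Fin 2) ℝ).symm (Pi.single j (1:ℝ)))
        = fun i => M i j := by
      show M *ᵥ (Pi.single j (1:ℝ)) = _
      rw [Matrix.mulVec_single]
      funext i
      simp
    rw [hmv] at h1
    have h3 : Real.sqrt ((M 0 j) ^ 2 + (M 1 j) ^ 2) ≤ ‖M‖ := by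
      rw [EuclideanSpace.norm_eq] at h1
      simpa [Fin.sum_univ_two, Real.norm_eq_abs, sq_abs] using h1
    nlinarith [Real.sq_sqrt (by positivity : (0:ℝ) ≤ (M 0 j) ^ 2 + (M 1 j) ^ 2),
      Real.sqrt_nonneg ((M 0 j) ^ 2 + (M 1 j) ^ 2), norm_nonneg M]
  have h0 := hcol 0
  have h1 := hcol 1
  have hd2 : M.det ^ 2 ≤ (‖M‖ ^ 2) ^ 2 := by
    rw [Matrix.det_fin_two]
    nlinarith [sq_nonneg (M 0 0 * M 0 1 + M 1 0 * M 1 1), sq_nonneg (M 0 0), sq_nonneg (M 0 1),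
      sq_nonneg (M 1 0), sq_nonneg (M 1 1), norm_nonneg M]
  have := Real.sqrt_le_sqrt hd2
  rwa [Real.sqrt_sq_eq_abs, Real.sqrt_sq (by positivity)] at this

/-- Liouville's formula for `2 × 2` real matrices: `det (exp (t • M)) = exp (t * tr M)`. -/
lemma det_exp_two (M : Matrix (Fin 2) (Fin 2) ℝ) (t : ℝ) :
    (exp (t • M)).det = Real.exp (t * M.trace) := by
  have hEntry : ∀ (i j : Fin 2) (t : ℝ),
      HasDerivAt (fun s : ℝ => exp (s • M) i j) ((exp (t • M) * M) i j) t := by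
    intro i j t
    have h := ((Matrix.entryLinearMap ℝ ℝ i j).toContinuousLinearMap.hasFDerivAt
      (x := exp (t • M))).comp_hasDerivAt t (hasDerivAt_exp_smul_const M t)
    exact h
  have hdet : ∀ t : ℝ, HasDerivAt (fun s : ℝ => (exp (s • M)).det)
      (M.trace * (exp (t • M)).det) t := by
    intro t
    have h := ((hEntry 0 0 t).mul (hEntry 1 1 t)).sub ((hEntry 0 1 t).mul (hEntry 1 0 t))
    have e1 : (fun s : ℝ => exp (s • M) 0 0 * exp (s • M) 1 1 -
        exp (s • M) 0 1 * exp (s • M) 1 0) = fun s : ℝ => (exp (s • M)).det := by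
      funext s; rw [Matrix.det_fin_two]
    simp only [Pi.mul_def, Pi.sub_def] at h
    rw [e1] at h
    refine h.congr_deriv ?_
    simp only [Matrix.det_fin_two, Matrix.trace_fin_two, Matrix.mul_apply, Fin.sum_univ_two]
    ring
  have key : ∀ t : ℝ, (exp (t • M)).det * Real.exp (-(t * M.trace)) = 1 := by
    have hg : ∀ t : ℝ, HasDerivAt
        (fun s : ℝ => (exp (s • M)).det * Real.exp (-(s * M.trace))) 0 t := by
      intro t
      have h1 : HasDerivAt (fun s : ℝ => -(s * M.trace)) (-M.trace) t := by
        exact (((hasDerivAt_id t).mul_const M.trace).neg).congr_deriv (by ring)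
      have h2 := (Real.hasDerivAt_exp (-(t * M.trace))).comp t h1
      simp only [Function.comp_def] at h2
      have h3 := (hdet t).mul h2
      simp only [Pi.mul_def] at h3
      refine h3.congr_deriv ?_
      ring
    intro t
    have hconst := is_const_of_deriv_eq_zero
      (fun s => (hg s).differentiableAt) (fun s => (hg s).deriv) t 0
    simpa [exp_zero] using hconst
  have h := key t
  rw [Real.exp_neg, mul_inv_eq_one₀ (Real.exp_ne_zero _)] at h
  exact h

/-- Similarity invariance of the trace. -/
lemma trace_conj_eq {P J : Matrix (Fin 2) (Fin 2) ℝ} (h : IsUnit P) :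
    (P * J * P⁻¹).trace = J.trace := by
  rw [Matrix.trace_mul_cycle, Matrix.nonsing_inv_mul _ ((Matrix.isUnit_iff_isUnit_det P).mp h),
    Matrix.one_mul]

/-- Cyclic reindexing of a product over `range p`. -/
lemma prod_range_shift {p : ℕ} (hp : 1 ≤ p) (f : ℕ → ℝ) :
    ∏ j ∈ Finset.range p, f ((j + 1) % p) = ∏ j ∈ Finset.range p, f j := by
  haveI : NeZero p := ⟨by omega⟩
  rw [← Fin.prod_univ_eq_prod_range (fun j => f ((j + 1) % p)) p,
    ← Fin.prod_univ_eq_prod_range f p]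
  rw [← Equiv.prod_comp (Equiv.addRight (1 : Fin p)) (fun i : Fin p => f ↑i)]
  apply Finset.prod_congr rfl
  intro i _
  congr 1
  simp [Equiv.coe_addRight, Fin.val_add, Fin.val_one', Nat.add_mod_mod]

/-- Trace obstruction for planar systems.  Let `p ≥ 1` and, for each `j ∈ {0,…,p−1}`, let
`A_j, J_j` be `2 × 2` real matrices and `P_j` invertible with `A_j = P_j J_j P_j⁻¹`
(indices along a loop, taken mod `p`).  If there exist `η_j > 0` with
`‖P_{(j+1) mod p}⁻¹ P_j · exp(η_j J_j)‖ < 1` for every `j`, then some `A_j` has negative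
trace; i.e. the traces cannot all be nonnegative. -/
theorem trace_obstruction_planar {p : ℕ} (hp : 1 ≤ p)
    (A J P : ℕ → Matrix (Fin 2) (Fin 2) ℝ)
    (hP : ∀ j < p, IsUnit (P j))
    (hA : ∀ j < p, A j = P j * J j * (P j)⁻¹)
    (hη : ∀ j < p, ∃ η > (0 : ℝ), ‖(P ((j + 1) % p))⁻¹ * P j * exp (η • J j)‖ < 1) :
    ∃ j < p, (A j).trace < 0 := by
  by_contra hcon
  push_neg at hcon
  have hη' : ∀ j, ∃ η : ℝ, 0 < η ∧
      (j < p → ‖(P ((j + 1) % p))⁻¹ * P j * exp (η • J j)‖ < 1) := by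
    intro j
    by_cases h : j < p
    · obtain ⟨η, h0, h1⟩ := hη j h
      exact ⟨η, h0, fun _ => h1⟩
    · exact ⟨1, one_pos, fun h' => absurd h' h⟩
  choose η hη0 hηlt using hη'
  set Mf : ℕ → Matrix (Fin 2) (Fin 2) ℝ :=
    fun j => (P ((j + 1) % p))⁻¹ * P j * exp (η j • J j) with hMf
  have hmod : ∀ j, (j + 1) % p < p := fun j => Nat.mod_lt _ (by omega)
  have hdetP : ∀ j < p, (P j).det ≠ 0 := fun j hj =>
    ((Matrix.isUnit_iff_isUnit_det (P j)).mp (hP j hj)).ne_zero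
  have hdet : ∀ j < p, |(Mf j).det| =
      |(P ((j + 1) % p)).det|⁻¹ * |(P j).det| * Real.exp (η j * (J j).trace) := by
    intro j hj
    simp only [hMf]
    rw [Matrix.det_mul, Matrix.det_mul, Matrix.det_nonsing_inv, Ring.inverse_eq_inv,
      det_exp_two, abs_mul, abs_mul, abs_inv, Real.abs_exp]
  have h1 : ∏ j ∈ Finset.range p, |(Mf j).det| =
      Real.exp (∑ j ∈ Finset.range p, η j * (J j).trace) := by
    rw [Finset.prod_congr rfl (fun j hj => hdet j (Finset.mem_range.mp hj))]
    rw [Finset.prod_mul_distrib, Finset.prod_mul_distrib, Finset.prod_inv_distrib,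
      prod_range_shift hp (fun j => |(P j).det|), ← Real.exp_sum]
    have hne : ∏ j ∈ Finset.range p, |(P j).det| ≠ 0 :=
      Finset.prod_ne_zero_iff.mpr fun j hj =>
        abs_ne_zero.mpr (hdetP j (Finset.mem_range.mp hj))
    rw [inv_mul_cancel₀ hne, one_mul]
  have h2 : (1 : ℝ) ≤ Real.exp (∑ j ∈ Finset.range p, η j * (J j).trace) := by
    have hsum : (0 : ℝ) ≤ ∑ j ∈ Finset.range p, η j * (J j).trace := by
      apply Finset.sum_nonneg
      intro j hj
      have hjp := Finset.mem_range.mp hj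
      have htr : (J j).trace = (A j).trace := by
        rw [hA j hjp, trace_conj_eq (hP j hjp)]
      exact mul_nonneg (hη0 j).le (htr ▸ hcon j hjp)
    calc (1 : ℝ) = Real.exp 0 := Real.exp_zero.symm
      _ ≤ _ := Real.exp_le_exp.mpr hsum
  have h3 : ∏ j ∈ Finset.range p, |(Mf j).det| < 1 := by
    have hsq : ∀ j < p, ‖Mf j‖ ^ 2 < 1 := by
      intro j hj
      exact pow_lt_one₀ (norm_nonneg _) (hηlt j hj) two_ne_zero
    calc ∏ j ∈ Finset.range p, |(Mf j).det|
        ≤ ∏ j ∈ Finset.range p, ‖Mf j‖ ^ 2 :=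
          Finset.prod_le_prod (fun j _ => abs_nonneg _)
            (fun j _ => abs_det_le_sq_l2_opNorm (Mf j))
      _ < 1 := by
          have h0mem : 0 ∈ Finset.range p := Finset.mem_range.mpr (by omega)
          rw [← Finset.mul_prod_erase (Finset.range p) (fun j => ‖Mf j‖ ^ 2) h0mem]
          calc ‖Mf 0‖ ^ 2 * ∏ j ∈ (Finset.range p).erase 0, ‖Mf j‖ ^ 2
              ≤ ‖Mf 0‖ ^ 2 * 1 := by
                apply mul_le_mul_of_nonneg_left _ (sq_nonneg _)
                apply Finset.prod_le_one (fun j _ => sq_nonneg _)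
                intro j hj
                exact (hsq j (Finset.mem_range.mp (Finset.mem_of_mem_erase hj))).le
            _ < 1 := by rw [mul_one]; exact hsq 0 (by omega)
  rw [h1] at h3
  linarith
end

section
/- For a 2×2 real matrix M, the spectral norm satisfies ‖M‖ < 1 if and only if (det M)² < 1 and ‖M‖_F² < 1 + (det M)², where ‖M‖_F² = Σ_{i,j} M_{ij}² is the squared Frobenius norm. -/
set_option maxHeartbeats 800000


open scoped Matrix.Norms.L2Operator
open Matrix

private lemma euclid_norm_two (w : Fin 2 → ℝ) :
    ‖(WithLp.equiv 2 (Fin 2 → ℝ)).symm w‖ = Real.sqrt (w 0 ^ 2 + w 1 ^ 2) := by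
  rw [EuclideanSpace.norm_eq]
  simp [Fin.sum_univ_two, sq_abs, Real.norm_eq_abs]

private lemma quad_bound (a b c ε : ℝ) (hpε : 0 < 1 - a - ε)
    (hfact : b ^ 2 ≤ (1 - a - ε) * (1 - c - ε)) (u v : ℝ) :
    a * u ^ 2 + 2 * b * u * v + c * v ^ 2 ≤ (1 - ε) * (u ^ 2 + v ^ 2) := by
  nlinarith [sq_nonneg ((1 - a - ε) * u - b * v), mul_nonneg (sub_nonneg.2 hfact) (sq_nonneg v),
    sq_nonneg u, sq_nonneg v]

/-- For a `2 × 2` real matrix `M`, the spectral norm satisfies `‖M‖ < 1` if and only if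
`(det M)² < 1 and `‖M‖_F² < 1 + (det M)²`, where `‖M‖_F² = Σ_{i,j} M_{ij}²` is the
squared Frobenius norm. -/
theorem spectral_norm_lt_one_iff (M : Matrix (Fin 2) (Fin 2) ℝ) :
    ‖M‖ < 1 ↔ M.det ^ 2 < 1 ∧ (∑ i, ∑ j, M i j ^ 2) < 1 + M.det ^ 2 := by
  set a : ℝ := M 0 0 ^ 2 + M 1 0 ^ 2 with ha_def
  set c : ℝ := M 0 1 ^ 2 + M 1 1 ^ 2 with hc_def
  set b : ℝ := M 0 0 * M 0 1 + M 1 0 * M 1 1 with hb_def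
  have hdet : M.det = M 0 0 * M 1 1 - M 0 1 * M 1 0 := Matrix.det_fin_two M
  have hsum : (∑ i, ∑ j, M i j ^ 2) = a + c := by
    simp [Fin.sum_univ_two, ha_def, hc_def]; ring
  have hid : a * c - b ^ 2 = M.det ^ 2 := by rw [hdet]; ring
  have ha0 : 0 ≤ a := by positivity
  have hc0 : 0 ≤ c := by positivity
  constructor
  · intro h
    have hM0 : 0 ≤ ‖M‖ := norm_nonneg M
    -- quadratic form bound
    have key : ∀ u v : ℝ, a * u ^ 2 + 2 * b * u * v + c * v ^ 2 ≤ ‖M‖^2 * (u ^ 2 + v ^ 2) := by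
      intro u v
      have h1 := M.l2_opNorm_mulVec ((WithLp.equiv 2 (Fin 2 → ℝ)).symm ![u, v])
      have hx : ‖(WithLp.equiv 2 (Fin 2 → ℝ)).symm ![u, v]‖ = Real.sqrt (u ^ 2 + v ^ 2) := by
        rw [euclid_norm_two]; norm_num
      have hy : ‖(EuclideanSpace.equiv (Fin 2) ℝ).symm
          (M *ᵥ (WithLp.equiv 2 (Fin 2 → ℝ)).symm ![u, v])‖
          = Real.sqrt ((M 0 0 * u + M 0 1 * v) ^ 2 + (M 1 0 * u + M 1 1 * v) ^ 2) := by
        rw [show (EuclideanSpace.equiv (Fin 2) ℝ).symm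
            (M *ᵥ (WithLp.equiv 2 (Fin 2 → ℝ)).symm ![u, v])
            = (WithLp.equiv 2 (Fin 2 → ℝ)).symm (M *ᵥ ![u, v]) from rfl]
        rw [euclid_norm_two]
        simp [Matrix.mulVec, dotProduct, Fin.sum_univ_two]
      rw [hy, hx] at h1
      have h2 : (M 0 0 * u + M 0 1 * v) ^ 2 + (M 1 0 * u + M 1 1 * v) ^ 2
          ≤ ‖M‖ ^ 2 * (u ^ 2 + v ^ 2) := by
        have h1' := mul_le_mul h1 h1 (Real.sqrt_nonneg _) (by positivity)
        rw [Real.mul_self_sqrt (by positivity), show (‖M‖ * Real.sqrt (u ^ 2 + v ^ 2)) *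
            (‖M‖ * Real.sqrt (u ^ 2 + v ^ 2))
            = ‖M‖ ^ 2 * (Real.sqrt (u ^ 2 + v ^ 2) * Real.sqrt (u ^ 2 + v ^ 2)) by ring,
          Real.mul_self_sqrt (by positivity)] at h1'
        exact h1'
      calc a * u ^ 2 + 2 * b * u * v + c * v ^ 2
          = (M 0 0 * u + M 0 1 * v) ^ 2 + (M 1 0 * u + M 1 1 * v) ^ 2 := by
            rw [ha_def, hb_def, hc_def]; ring
        _ ≤ ‖M‖ ^ 2 * (u ^ 2 + v ^ 2) := h2
    have hN : ‖M‖ ^ 2 < 1 := by nlinarith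
    have hN0 : 0 ≤ ‖M‖ ^ 2 := sq_nonneg _
    have ha1 : a ≤ ‖M‖ ^ 2 := by have := key 1 0; nlinarith
    have hc1 : c ≤ ‖M‖ ^ 2 := by have := key 0 1; nlinarith
    have hp : 0 < 1 - a := by linarith
    have h3 := key b (1 - a)
    have h4 : (1 - ‖M‖ ^ 2) * (b ^ 2 + (1 - a) ^ 2) ≤ (1 - a) * ((1 - a) * (1 - c) - b ^ 2) := by
      nlinarith [h3]
    have hbp : 0 < b ^ 2 + (1 - a) ^ 2 := by nlinarith [sq_nonneg b, mul_pos hp hp]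
    have h5 : 0 < (1 - a) * ((1 - a) * (1 - c) - b ^ 2) :=
      lt_of_lt_of_le (mul_pos (by linarith) hbp) h4
    have hD : 0 < (1 - a) * (1 - c) - b ^ 2 := by nlinarith [h5]
    constructor
    · nlinarith [mul_le_mul ha1 hc1 hc0 hN0, sq_nonneg b]
    · rw [hsum]; nlinarith
  · rintro ⟨h1, h2⟩
    rw [hsum] at h2
    have hD : 0 < (1 - a) * (1 - c) - b ^ 2 := by nlinarith
    have hp : 0 < 1 - a := by
      by_contra hp'
      push_neg at hp'
      have e1 : a * c - b ^ 2 > a + c - 1 := by nlinarith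
      have e2 : a + c < 2 := by nlinarith
      have hc1 : c < 1 := by linarith
      nlinarith [sq_nonneg b, mul_nonpos_of_nonpos_of_nonneg (by linarith : 1 - a ≤ 0)
        (by linarith : (0:ℝ) ≤ 1 - c)]
    have hr : 0 < 1 - c := by
      by_contra hr'
      push_neg at hr'
      nlinarith [sq_nonneg b, mul_nonpos_of_nonneg_of_nonpos hp.le (by linarith : 1 - c ≤ 0)]
    set D : ℝ := (1 - a) * (1 - c) - b ^ 2 with hD_def
    set ε : ℝ := min ((1 - a) / 2) (min ((1 - c) / 2) (D / (2 * ((1 - a) + (1 - c))))) with hε_def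
    have hprsum : 0 < (1 - a) + (1 - c) := by linarith
    have hε0 : 0 < ε := by
      refine lt_min (by linarith) (lt_min (by linarith) ?_)
      positivity
    have hεp : ε ≤ (1 - a) / 2 := min_le_left _ _
    have hεr : ε ≤ (1 - c) / 2 := le_trans (min_le_right _ _) (min_le_left _ _)
    have hεD : ε ≤ D / (2 * ((1 - a) + (1 - c))) :=
      le_trans (min_le_right _ _) (min_le_right _ _)
    have hεD' : ε * (2 * ((1 - a) + (1 - c))) ≤ D := by
      rw [← le_div_iff₀ (by positivity)]; exact hεD
    have hpε : 0 < 1 - a - ε := by linarith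
    have hrε : 0 < 1 - c - ε := by linarith
    have hfact : b ^ 2 ≤ (1 - a - ε) * (1 - c - ε) := by nlinarith [sq_nonneg ε]
    -- so the operator norm is at most √(1-ε)
    have hbound : ‖M‖ ≤ Real.sqrt (1 - ε) := by
      rw [Matrix.l2_opNorm_def]
      refine ContinuousLinearMap.opNorm_le_bound _ (Real.sqrt_nonneg _) fun x => ?_
      set u : ℝ := x 0 with hu
      set v : ℝ := x 1 with hv
      have hxnorm : ‖x‖ = Real.sqrt (u ^ 2 + v ^ 2) := by
        rw [EuclideanSpace.norm_eq]
        simp [Fin.sum_univ_two, sq_abs, Real.norm_eq_abs, hu, hv]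
      have hTx : ((Matrix.toEuclideanLin.trans LinearMap.toContinuousLinearMap) M) x
          = (WithLp.equiv 2 (Fin 2 → ℝ)).symm ![M 0 0 * u + M 0 1 * v, M 1 0 * u + M 1 1 * v] := by
        apply (WithLp.equiv 2 (Fin 2 → ℝ)).symm_apply_eq.mpr ?_ |>.symm
        funext i
        fin_cases i <;>
          simp [Matrix.toEuclideanLin_apply, Matrix.mulVec, dotProduct, Fin.sum_univ_two, hu, hv]
      rw [hTx, euclid_norm_two, hxnorm]
      have hq : (M 0 0 * u + M 0 1 * v) ^ 2 + (M 1 0 * u + M 1 1 * v) ^ 2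
          ≤ (1 - ε) * (u ^ 2 + v ^ 2) := by
        have := quad_bound a b c ε hpε hfact u v
        calc (M 0 0 * u + M 0 1 * v) ^ 2 + (M 1 0 * u + M 1 1 * v) ^ 2
            = a * u ^ 2 + 2 * b * u * v + c * v ^ 2 := by rw [ha_def, hb_def, hc_def]; ring
          _ ≤ (1 - ε) * (u ^ 2 + v ^ 2) := this
      calc Real.sqrt (((M 0 0 * u + M 0 1 * v) ^ 2 + (M 1 0 * u + M 1 1 * v) ^ 2 : ℝ))
          ≤ Real.sqrt ((1 - ε) * (u ^ 2 + v ^ 2)) := Real.sqrt_le_sqrt hq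
        _ = Real.sqrt (1 - ε) * Real.sqrt (u ^ 2 + v ^ 2) := Real.sqrt_mul (by linarith) _
      -- matrix entries: `![...] i` gives nicer terms
    have hlt : Real.sqrt (1 - ε) < 1 := by
      have : Real.sqrt (1 - ε) < Real.sqrt 1 := Real.sqrt_lt_sqrt (by linarith) (by linarith)
      simpa using this
    exact lt_of_le_of_lt hbound hlt
end

section
/- Let M be an n×n real matrix and λ* a real number such that every eigenvalue μ ∈ ℂ of M (equivalently, every root of the characteristic polynomial of M over ℂ) satisfies Re(μ) < λ*. Then there exists a constant β ≥ 1 such that ‖exp(tM)‖ ≤ β e^{λ* t} for all t ≥ 0. -/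
open scoped Matrix.Norms.L2Operator
open NormedSpace
open Matrix

-- eigenvector of B is eigenvector of exp B
lemma exp_mulVec_eigenvector {n : ℕ} (B : Matrix (Fin n) (Fin n) ℂ)
    {v : Fin n → ℂ} {ν : ℂ} (hv : B *ᵥ v = ν • v) :
    exp B *ᵥ v = Complex.exp ν • v := by
  have hpow : ∀ k : ℕ, (B ^ k) *ᵥ v = (ν ^ k) • v := by
    intro k
    induction k with
    | zero => simp
    | succ k ih =>
      rw [pow_succ, ← Matrix.mulVec_mulVec, hv, Matrix.mulVec_smul, ih, smul_smul, pow_succ,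
        mul_comm]
  let L : Matrix (Fin n) (Fin n) ℂ →ₗ[ℂ] (Fin n → ℂ) :=
    { toFun := fun X => X *ᵥ v
      map_add' := fun X Y => Matrix.add_mulVec X Y v
      map_smul' := fun c X => Matrix.smul_mulVec c X v }
  have hL : Continuous L := L.continuous_of_finiteDimensional
  have hexp : exp B = ∑' k : ℕ, (((k.factorial : ℂ))⁻¹) • B ^ k := by
    rw [exp_eq_tsum ℂ]
  have hsum : Summable fun k : ℕ => (((k.factorial : ℂ))⁻¹) • B ^ k := expSeries_summable' (𝕂 := ℂ) B
  have : L (exp B) = ∑' k : ℕ, L ((((k.factorial : ℂ))⁻¹) • B ^ k) := by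
    rw [hexp]
    exact (hsum.hasSum.map L hL).tsum_eq.symm
  have h2 : ∀ k : ℕ, L ((((k.factorial : ℂ))⁻¹) • B ^ k) = ((((k.factorial : ℂ))⁻¹) * ν ^ k) • v := by
    intro k
    simp only [L, LinearMap.coe_mk, AddHom.coe_mk, _root_.map_smul, RingHom.id_apply]
    rw [hpow, smul_smul]
  have h3 : exp B *ᵥ v = ∑' k : ℕ, ((((k.factorial : ℂ))⁻¹) * ν ^ k) • v := by
    calc exp B *ᵥ v = L (exp B) := rfl
    _ = ∑' k : ℕ, L ((((k.factorial : ℂ))⁻¹) • B ^ k) := this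
    _ = _ := by exact tsum_congr h2
  have hsum2 : Summable fun z : ℕ => ((z.factorial : ℂ))⁻¹ * ν ^ z := by
    have := expSeries_summable' (𝕂 := ℂ) ν
    simpa [smul_eq_mul] using this
  rw [h3, hsum2.tsum_smul_const]
  congr 1
  rw [Complex.exp_eq_exp_ℂ, exp_eq_tsum ℂ]
  simp [smul_eq_mul]

lemma spectrum_exp_subset {n : ℕ} (B : Matrix (Fin n) (Fin n) ℂ) :
    spectrum ℂ (exp B) ⊆ Complex.exp '' spectrum ℂ B := by
  intro μ hμ
  -- pass to endomorphisms
  have hμ' : Module.End.HasEigenvalue (Matrix.toLinAlgEquiv' (exp B)) μ := by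
    rw [Module.End.hasEigenvalue_iff_mem_spectrum, AlgEquiv.spectrum_eq]
    exact hμ
  set f : Module.End ℂ (Fin n → ℂ) := Matrix.toLinAlgEquiv' (exp B) with hf
  set g : Module.End ℂ (Fin n → ℂ) := Matrix.toLinAlgEquiv' B with hg
  set E := Module.End.eigenspace f μ with hE
  obtain ⟨v, hvE, hvne⟩ := hμ'.exists_hasEigenvector
  have hcomm : exp B * B = B * exp B := ((Commute.refl B).exp_left).eq
  have hinv : ∀ x ∈ E, g x ∈ E := by
    intro x hx
    have hx' : f x = μ • x := Module.End.mem_eigenspace_iff.mp hx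
    have hfg : f (g x) = g (f x) := by
      simp only [hf, hg, Matrix.toLinAlgEquiv'_apply, Matrix.mulVec_mulVec, hcomm]
    refine Module.End.mem_eigenspace_iff.mpr ?_
    rw [hfg, hx', _root_.map_smul]
  haveI : Nontrivial E := by
    refine nontrivial_of_ne ⟨v, hvE⟩ 0 (fun h => hvne ?_)
    exact congrArg Subtype.val h
  obtain ⟨ν, hν⟩ := Module.End.exists_eigenvalue (g.restrict hinv)
  obtain ⟨w, hwE, hwne⟩ := hν.exists_hasEigenvector
  have hw0 : (w : Fin n → ℂ) ≠ 0 := fun h => hwne (Subtype.ext h)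
  have hBw : B *ᵥ (w : Fin n → ℂ) = ν • (w : Fin n → ℂ) := by
    have h1 : g.restrict hinv w = ν • w := Module.End.mem_eigenspace_iff.mp hwE
    have h2 : g (w : Fin n → ℂ) = ν • (w : Fin n → ℂ) := by
      have := congrArg (Subtype.val) h1
      simpa [LinearMap.restrict_apply] using this
    simpa [hg, Matrix.toLinAlgEquiv'_apply] using h2
  have hexpw : exp B *ᵥ (w : Fin n → ℂ) = μ • (w : Fin n → ℂ) := by
    have h1 : f (w : Fin n → ℂ) = μ • (w : Fin n → ℂ) := Module.End.mem_eigenspace_iff.mp w.2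
    simpa [hf, Matrix.toLinAlgEquiv'_apply] using h1
  have hexpw' := exp_mulVec_eigenvector B hBw
  have hμν : μ = Complex.exp ν := by
    have h := hexpw.symm.trans hexpw'
    by_contra hne
    exact hw0 (by
      have := sub_eq_zero.mpr h
      rw [← sub_smul] at this
      exact (smul_eq_zero.mp this).resolve_left (sub_ne_zero.mpr hne))
  have hνspec : ν ∈ spectrum ℂ B := by
    rw [← AlgEquiv.spectrum_eq Matrix.toLinAlgEquiv', ← Module.End.hasEigenvalue_iff_mem_spectrum]
    exact Module.End.hasEigenvalue_of_hasEigenvector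
      ⟨Module.End.mem_eigenspace_iff.mpr (by simpa [Matrix.toLinAlgEquiv'_apply] using hBw), hw0⟩
  exact ⟨ν, hνspec, hμν.symm⟩

lemma exists_bound_exp_of_spectrum_re_neg {n : ℕ} (B : Matrix (Fin n) (Fin n) ℂ)
    (h : ∀ ν ∈ spectrum ℂ B, ν.re < 0) :
    ∃ C : ℝ, 1 ≤ C ∧ ∀ t : ℝ, 0 ≤ t → ‖exp ((t : ℂ) • B)‖ ≤ C := by
  rcases Nat.eq_zero_or_pos n with hn | hn
  · subst hn
    refine ⟨1, le_refl 1, fun t ht => ?_⟩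
    have : exp ((t : ℂ) • B) = 0 := by ext i j; exact i.elim0
    rw [this, norm_zero]; exact zero_le_one
  haveI : NeZero n := ⟨hn.ne'⟩
  -- spectral radius of exp B is < 1
  obtain ⟨ν₀, hν₀, hmax⟩ :=
    Set.exists_max_image (spectrum ℂ B) Complex.re (Matrix.finite_spectrum B)
      (spectrum.nonempty B)
  set ρ : ℝ := Real.exp ν₀.re with hρ
  have hρ1 : ρ < 1 := Real.exp_lt_one_iff.mpr (h ν₀ hν₀)
  have hρ0 : 0 < ρ := Real.exp_pos _
  have hr : spectralRadius ℂ (exp B) ≤ ENNReal.ofReal ρ := by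
    rw [spectralRadius]
    refine iSup₂_le fun μ hμ => ?_
    obtain ⟨ν, hν, rfl⟩ := spectrum_exp_subset B hμ
    rw [← ENNReal.ofReal_coe_nnreal, coe_nnnorm]
    refine ENNReal.ofReal_le_ofReal ?_
    rw [Complex.norm_exp]
    exact Real.exp_le_exp.mpr (hmax ν hν)
  have hrlt : spectralRadius ℂ (exp B) < 1 := by
    refine lt_of_le_of_lt hr ?_
    rw [← ENNReal.ofReal_one]
    exact ENNReal.ofReal_lt_ofReal_iff_of_nonneg hρ0.le |>.mpr hρ1
  have T := spectrum.pow_nnnorm_pow_one_div_tendsto_nhds_spectralRadius (exp B)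
  have hev : ∀ᶠ k : ℕ in Filter.atTop,
      (‖(exp B) ^ k‖₊ : ENNReal) ^ (1 / (k : ℝ)) < 1 := T.eventually_lt_const hrlt
  obtain ⟨N, hN⟩ := Filter.eventually_atTop.mp hev
  have hpow1 : ∀ k : ℕ, max N 1 ≤ k → ‖(exp B) ^ k‖ ≤ 1 := by
    intro k hk
    have hk1 : 1 ≤ k := le_trans (le_max_right N 1) hk
    have hx := hN k (le_trans (le_max_left N 1) hk)
    have hknz : (k : ℝ) ≠ 0 := Nat.cast_ne_zero.mpr (by omega)
    have : ((‖(exp B) ^ k‖₊ : ENNReal) ^ (1 / (k : ℝ))) ^ (k : ℝ) ≤ 1 := by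
      calc _ ≤ (1 : ENNReal) ^ (k : ℝ) :=
            ENNReal.rpow_le_rpow hx.le (Nat.cast_nonneg k)
      _ = 1 := ENNReal.one_rpow _
    rw [← ENNReal.rpow_mul, one_div, inv_mul_cancel₀ hknz, ENNReal.rpow_one] at this
    have h1 : ‖(exp B) ^ k‖₊ ≤ 1 := by exact_mod_cast this
    exact_mod_cast h1
  set N' := max N 1 with hN'
  set C1 : ℝ := 1 + ∑ j ∈ Finset.range N', ‖(exp B) ^ j‖ with hC1
  have hC1one : 1 ≤ C1 := by
    rw [hC1]
    have : (0:ℝ) ≤ ∑ j ∈ Finset.range N', ‖(exp B) ^ j‖ :=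
      Finset.sum_nonneg fun j _ => norm_nonneg _
    linarith
  have hC1bound : ∀ k : ℕ, ‖(exp B) ^ k‖ ≤ C1 := by
    intro k
    rcases lt_or_ge k N' with hk | hk
    · have := Finset.single_le_sum (f := fun j => ‖(exp B) ^ j‖)
        (fun j _ => norm_nonneg _) (Finset.mem_range.mpr hk)
      rw [hC1]; linarith
    · exact le_trans (hpow1 k hk) hC1one
  -- bound on [0,1]
  have hcont : Continuous fun s : ℝ => ‖exp ((s : ℂ) • B)‖ :=
    ((by
      letI : NormedRing (Matrix (Fin n) (Fin n) ℂ) := Matrix.linftyOpNormedRing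
      letI : NormedAlgebra ℚ (Matrix (Fin n) (Fin n) ℂ) := Matrix.linftyOpNormedAlgebra
      exact @exp_continuous _ _ _ (inferInstance : CompleteSpace (Fin n → Fin n → ℂ)) : Continuous (exp : Matrix (Fin n) (Fin n) ℂ → _)).comp
      ((Complex.continuous_ofReal.smul continuous_const))).norm
  obtain ⟨s₀, hs₀mem, hs₀max⟩ := isCompact_Icc.exists_isMaxOn (s := Set.Icc (0:ℝ) 1)
    ⟨0, by norm_num⟩ hcont.continuousOn
  set C2 : ℝ := ‖exp ((s₀ : ℂ) • B)‖ with hC2def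
  have hC2 : ∀ s : ℝ, s ∈ Set.Icc (0:ℝ) 1 → ‖exp ((s : ℂ) • B)‖ ≤ C2 := fun s hs => hs₀max hs
  have hC2nonneg : 0 ≤ C2 := norm_nonneg _
  refine ⟨max 1 (C1 * C2), le_max_left _ _, fun t ht => ?_⟩
  set k : ℕ := ⌊t⌋₊ with hk
  set s : ℝ := t - k with hs
  have hs0 : 0 ≤ s := by
    have := Nat.floor_le ht
    rw [hs]; linarith
  have hs1 : s ≤ 1 := by
    have := Nat.lt_floor_add_one t
    rw [hs]; linarith
  have hsplit : (t : ℂ) • B = (k : ℂ) • B + (s : ℂ) • B := by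
    rw [← add_smul]
    congr 1
    rw [hs]
    push_cast
    ring
  have hcomm : Commute ((k : ℂ) • B) ((s : ℂ) • B) :=
    ((Commute.refl B).smul_left _).smul_right _
  have hnsmul : ((k : ℕ) : ℂ) • B = (k : ℕ) • B := Nat.cast_smul_eq_nsmul ℂ k B
  have : exp ((t : ℂ) • B) = (exp B) ^ k * exp ((s : ℂ) • B) := by
    rw [hsplit, Matrix.exp_add_of_commute _ _ hcomm, hnsmul, Matrix.exp_nsmul]
  rw [this]
  calc ‖(exp B) ^ k * exp ((s : ℂ) • B)‖
      ≤ ‖(exp B) ^ k‖ * ‖exp ((s : ℂ) • B)‖ := norm_mul_le _ _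
    _ ≤ C1 * C2 := mul_le_mul (hC1bound k) (hC2 s ⟨hs0, hs1⟩) (norm_nonneg _)
        (le_trans zero_le_one hC1one)
    _ ≤ max 1 (C1 * C2) := le_max_right _ _

set_option maxHeartbeats 2000000 in
lemma norm_le_norm_map_ofReal {n : ℕ} (X : Matrix (Fin n) (Fin n) ℝ) :
    ‖X‖ ≤ ‖X.map (Complex.ofReal ·)‖ := by
  rw [Matrix.l2_opNorm_def]
  refine ContinuousLinearMap.opNorm_le_bound _ (norm_nonneg _) fun x => ?_
  set y : EuclideanSpace ℂ (Fin n) :=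
    (WithLp.equiv 2 (Fin n → ℂ)).symm (fun i => ((x i : ℝ) : ℂ)) with hy
  have hynorm : ‖y‖ = ‖x‖ := by
    rw [EuclideanSpace.norm_eq, EuclideanSpace.norm_eq]
    congr 1
    refine Finset.sum_congr rfl fun i _ => ?_
    simp [hy, Complex.norm_real]
  have hmv : (X.map (Complex.ofReal ·)) *ᵥ (fun i => ((x i : ℝ) : ℂ))
      = fun i => (((X *ᵥ (WithLp.equiv 2 (Fin n → ℝ)) x) i : ℝ) : ℂ) := by
    funext i
    have := RingHom.map_mulVec Complex.ofRealHom X ((WithLp.equiv 2 (Fin n → ℝ)) x) i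
    exact this.symm
  have hbound := Matrix.l2_opNorm_mulVec (X.map (Complex.ofReal ·)) y
  have hEq : ‖(EuclideanSpace.equiv (Fin n) ℂ).symm ((X.map (Complex.ofReal ·)) *ᵥ y)‖
      = ‖((Matrix.toEuclideanLin.trans LinearMap.toContinuousLinearMap) X) x‖ := by
    rw [EuclideanSpace.norm_eq, EuclideanSpace.norm_eq]
    congr 1
    refine Finset.sum_congr rfl fun i _ => ?_
    have h1 : ((EuclideanSpace.equiv (Fin n) ℂ).symm ((X.map (Complex.ofReal ·)) *ᵥ y)) i
        = ((X.map (Complex.ofReal ·)) *ᵥ (fun i => ((x i : ℝ) : ℂ))) i := rfl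
    have h2 : (((Matrix.toEuclideanLin.trans LinearMap.toContinuousLinearMap) X) x) i
        = (X *ᵥ (WithLp.equiv 2 (Fin n → ℝ)) x) i := rfl
    rw [h1, h2, hmv]
    simp [Complex.norm_real]
  calc ‖((Matrix.toEuclideanLin.trans LinearMap.toContinuousLinearMap) X) x‖
      = ‖(EuclideanSpace.equiv (Fin n) ℂ).symm ((X.map (Complex.ofReal ·)) *ᵥ y)‖ := hEq.symm
    _ ≤ ‖X.map (Complex.ofReal ·)‖ * ‖y‖ := hbound
    _ = ‖X.map (Complex.ofReal ·)‖ * ‖x‖ := by rw [hynorm]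

/-- Let `M` be an `n × n` real matrix and `λ*` a real number such that every eigenvalue
`μ ∈ ℂ` of `M` satisfies `Re(μ) < λ*`.  Then there exists `β ≥ 1` such that
`‖exp(tM)‖ ≤ β e^{λ* t}` for all `t ≥ 0`. -/
theorem norm_exp_le_of_spectral_abscissa_lt {n : ℕ}
    (M : Matrix (Fin n) (Fin n) ℝ) (lamStar : ℝ)
    (hspec : ∀ μ ∈ spectrum ℂ (M.map (Complex.ofReal ·)), μ.re < lamStar) :
    ∃ β : ℝ, 1 ≤ β ∧ ∀ t : ℝ, 0 ≤ t → ‖exp (t • M)‖ ≤ β * Real.exp (lamStar * t) := by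
  set A : Matrix (Fin n) (Fin n) ℂ := M.map (Complex.ofReal ·) with hA
  set B : Matrix (Fin n) (Fin n) ℂ := A - (lamStar : ℂ) • 1 with hB
  have hspecB : ∀ ν ∈ spectrum ℂ B, ν.re < 0 := by
    intro ν hν
    have hAeq : A = algebraMap ℂ (Matrix (Fin n) (Fin n) ℂ) (lamStar : ℂ) + B := by
      rw [hB, Algebra.algebraMap_eq_smul_one]
      abel
    have hmem : (lamStar : ℂ) + ν ∈ spectrum ℂ A := by
      rw [hAeq, ← spectrum.singleton_add_eq]
      exact Set.add_mem_add rfl hν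
    have := hspec _ hmem
    simp only [Complex.add_re, Complex.ofReal_re] at this
    linarith
  obtain ⟨C, hC1, hC⟩ := exists_bound_exp_of_spectrum_re_neg B hspecB
  refine ⟨C, hC1, fun t ht => ?_⟩
  -- complexification of the exponential
  have hmap : (exp (t • M)).map (Complex.ofReal ·) = exp ((t : ℂ) • A) := by
    let φ : Matrix (Fin n) (Fin n) ℝ →ₐ[ℝ] Matrix (Fin n) (Fin n) ℂ :=
      AlgHom.mapMatrix Complex.ofRealAm
    have hφ : Continuous φ := φ.toLinearMap.continuous_of_finiteDimensional
    have h1 : φ (exp (t • M)) = exp (φ (t • M)) := by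
      letI : NormedRing (Matrix (Fin n) (Fin n) ℝ) := Matrix.linftyOpNormedRing
      letI : NormedAlgebra ℚ (Matrix (Fin n) (Fin n) ℝ) := Matrix.linftyOpNormedAlgebra
      exact @map_exp (Matrix (Fin n) (Fin n) ℝ) _ _ _ (inferInstance : CompleteSpace (Fin n → Fin n → ℝ)) _ _ _ _ _ φ hφ (t • M)
    have h2 : φ (t • M) = (t : ℂ) • A := by
      ext i j
      simp only [φ, AlgHom.mapMatrix_apply, Matrix.map_apply, Matrix.smul_apply, hA,
        Complex.ofRealAm_coe, Complex.real_smul, Complex.ofReal_mul, smul_eq_mul]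
    have h3 : (exp : Matrix (Fin n) (Fin n) ℂ → _) = exp :=
      rfl
    have h4 : φ (exp (t • M)) = (exp (t • M)).map (Complex.ofReal ·) := rfl
    rw [← h4, h1, h2, h3]
  have hsplit : (t : ℂ) • A = ((lamStar * t : ℝ) : ℂ) • (1 : Matrix (Fin n) (Fin n) ℂ)
      + (t : ℂ) • B := by
    rw [hB, smul_sub, smul_smul]
    push_cast
    rw [mul_comm (t:ℂ) (lamStar:ℂ)]
    abel
  have hcomm : Commute (((lamStar * t : ℝ) : ℂ) • (1 : Matrix (Fin n) (Fin n) ℂ))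
      ((t : ℂ) • B) := ((Commute.one_left B).smul_left _).smul_right _
  have hexp1 : exp (((lamStar * t : ℝ) : ℂ) • (1 : Matrix (Fin n) (Fin n) ℂ))
      = Complex.exp ((lamStar * t : ℝ) : ℂ) • 1 := by
    rw [← Algebra.algebraMap_eq_smul_one, ← map_exp (algebraMap ℂ (Matrix (Fin n) (Fin n) ℂ))
      (continuous_algebraMap _ _), ← Complex.exp_eq_exp_ℂ, Algebra.algebraMap_eq_smul_one]
  have key : exp ((t : ℂ) • A)
      = Complex.exp ((lamStar * t : ℝ) : ℂ) • exp ((t : ℂ) • B) := by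
    rw [hsplit, Matrix.exp_add_of_commute _ _ hcomm, hexp1, smul_mul_assoc, one_mul]
  calc ‖exp (t • M)‖ ≤ ‖(exp (t • M)).map (Complex.ofReal ·)‖ :=
        norm_le_norm_map_ofReal _
    _ = ‖exp ((t : ℂ) • A)‖ := by rw [hmap]
    _ = ‖Complex.exp ((lamStar * t : ℝ) : ℂ)‖ * ‖exp ((t : ℂ) • B)‖ := by
        rw [key, norm_smul]
    _ = Real.exp (lamStar * t) * ‖exp ((t : ℂ) • B)‖ := by
        rw [Complex.norm_exp]
        simp
    _ ≤ Real.exp (lamStar * t) * C := by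
        exact mul_le_mul_of_nonneg_left (hC t ht) (Real.exp_nonneg _)
    _ = C * Real.exp (lamStar * t) := mul_comm _ _
end
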